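/- Let h : 𝒯 → 𝒜 be a homology theory that reflects isomorphisms and is full. Let X, Y, Z be objects of 𝒯 and let 0 → h(Y) →σ h(Z) →τ h(X)[1] → 0 be a short exact sequence in 𝒜. Then there exist a morphism α : X → Y with h(α) = 0 and a distinguished triangle X →α Y →β Z →γ X[1] in 𝒯 such that h(β) = σ and h(γ) = τ (via the natural isomorphism h(X[1]) ≅ h(X)[1]). -/

import Mathlib

open CategoryTheory Category Limits Pretriangulated

/-- Let `h` be a homology theory that reflects isomorphisms and is full.
Any short exact sequence `0 ⟶ h(Y) ⟶σ h(Z) ⟶τ h(X)⟦1⟧ ⟶ 0` in `𝒜` is realized by a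
distinguished triangle `X ⟶α Y ⟶β Z ⟶γ X⟦1⟧` with `h(α) = 0`, `h(β) = σ` and
`h(γ) = τ` (via the natural isomorphism `h(X⟦1⟧) ≅ h(X)⟦1⟧`). -/
theorem distTriang_realizing_extension
    {T : Type*} [Category T] [HasZeroObject T] [Preadditive T] [HasShift T ℤ]
    [∀ n : ℤ, (shiftFunctor T n).Additive] [Pretriangulated T]
    {A : Type*} [Category A] [Abelian A] [HasShift A ℤ]
    [∀ n : ℤ, (shiftFunctor A n).Additive]
    (h : T ⥤ A) [h.Additive] [h.CommShift ℤ] [h.IsHomological]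
    [h.ReflectsIsomorphisms] [h.Full]
    (X Y Z : T) (σ : h.obj Y ⟶ h.obj Z) (τ : h.obj Z ⟶ (h.obj X)⟦(1:ℤ)⟧)
    (w : σ ≫ τ = 0) (hS : (ShortComplex.mk σ τ w).ShortExact) :
    ∃ (α : X ⟶ Y) (β : Y ⟶ Z) (γ : Z ⟶ X⟦(1:ℤ)⟧),
      h.map α = 0 ∧ (Triangle.mk α β γ ∈ distTriang T) ∧
      h.map β = σ ∧ h.map γ ≫ (h.commShiftIso (1:ℤ)).hom.app X = τ := by
  -- lift σ to β
  obtain ⟨β, rfl⟩ := h.map_surjective σ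
  -- cone of β
  obtain ⟨W, g, f, hTβ⟩ := distinguished_cocone_triangle β
  have hmono : Mono (h.map β) := hS.mono_f
  -- h.map (β⟦1⟧) is mono
  have hnat : h.map (β⟦(1:ℤ)⟧') ≫ (h.commShiftIso (1:ℤ)).hom.app Z =
      (h.commShiftIso (1:ℤ)).hom.app Y ≫ (h.map β)⟦(1:ℤ)⟧' :=
    (h.commShiftIso (1:ℤ)).hom.naturality β
  have hmono1 : Mono (h.map (β⟦(1:ℤ)⟧')) := by
    have : Mono ((h.map β)⟦(1:ℤ)⟧') := (shiftFunctor A (1:ℤ)).map_mono _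
    have : Mono ((h.commShiftIso (1:ℤ)).hom.app Y ≫ (h.map β)⟦(1:ℤ)⟧') := mono_comp _ _
    rw [← hnat] at this
    exact mono_of_mono _ ((h.commShiftIso (1:ℤ)).hom.app Z)
  -- h.map f = 0
  have hf0 : h.map f = 0 := by
    have : h.map f ≫ h.map (β⟦(1:ℤ)⟧') = 0 := by
      rw [← h.map_comp,
        show f ≫ β⟦(1:ℤ)⟧' = 0 from comp_distTriang_mor_zero₃₁ _ hTβ, h.map_zero]
    exact zero_of_comp_mono _ this
  -- exactness at h W : h.map g is epi
  have hex2 : (ShortComplex.mk (h.map g) (h.map f) (by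
      rw [← h.map_comp, show g ≫ f = 0 from comp_distTriang_mor_zero₂₃ _ hTβ,
        h.map_zero])).Exact :=
    h.map_distinguished_exact (Triangle.mk β g f).rotate (rot_of_distTriang _ hTβ)
  have hepig : Epi (h.map g) := hex2.epi_f hf0
  -- short exact sequence (h β, h g)
  have w' : h.map β ≫ h.map g = 0 := by
    rw [← h.map_comp, show β ≫ g = 0 from comp_distTriang_mor_zero₁₂ _ hTβ, h.map_zero]
  have hSE : (ShortComplex.mk (h.map β) (h.map g) w').ShortExact :=
    { exact := h.map_distinguished_exact _ hTβ, mono_f := hmono, epi_g := hepig }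
  -- both h.map g and τ are cokernels of h.map β
  have c1 := hSE.gIsCokernel
  have c2 := hS.gIsCokernel
  -- compare: iso φ with h.map g ≫ φ = τ
  let φ : h.obj W ≅ (h.obj X)⟦(1:ℤ)⟧ := IsColimit.coconePointUniqueUpToIso c1 c2
  have hφ : h.map g ≫ φ.hom = τ := by
    have := IsColimit.comp_coconePointUniqueUpToIso_hom c1 c2 WalkingParallelPair.one
    simpa using this
  -- lift φ to an iso u : W ≅ X⟦1⟧
  obtain ⟨u, hu⟩ := h.map_surjective (φ.hom ≫ (h.commShiftIso (1:ℤ)).inv.app X)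
  have : IsIso (h.map u) := by rw [hu]; infer_instance
  have hui : IsIso u := isIso_of_reflects_iso u h
  -- modified triangle
  have hT2 : Triangle.mk β (g ≫ u) (inv u ≫ f) ∈ distTriang T := by
    refine isomorphic_distinguished _ hTβ _ ?_
    exact Triangle.isoMk _ _ (Iso.refl _) (Iso.refl _) (asIso u).symm
      (by simp [Triangle.mk]) (by simp [Triangle.mk]) (by simp [Triangle.mk])
  -- invRotate
  have hT3 := inv_rot_of_distTriang _ hT2
  refine ⟨(shiftEquiv T (1:ℤ)).unitIso.hom.app X ≫
      (Triangle.mk β (g ≫ u) (inv u ≫ f)).invRotate.mor₁, β, g ≫ u, ?_, ?_, rfl, ?_⟩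
  · -- h.map α = 0
    have hm3 : h.map (inv u ≫ f) = 0 := by rw [h.map_comp, hf0, comp_zero]
    have hsh : h.map ((inv u ≫ f)⟦(-1:ℤ)⟧') = 0 := by
      have hnat2 := (h.commShiftIso (-1:ℤ)).hom.naturality (inv u ≫ f)
      dsimp at hnat2
      rw [hm3, Functor.map_zero, comp_zero] at hnat2
      rw [← cancel_mono ((h.commShiftIso (-1:ℤ)).hom.app (Y⟦(1:ℤ)⟧)), zero_comp]
      exact hnat2
    have key : ∀ {P Q R : T} (a : X ⟶ P) (b : P ⟶ Q) (c : Q ⟶ R), h.map b = 0 →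
        h.map (a ≫ (-(b ≫ c))) = 0 := by
      intro P Q R a b c hb
      simp [hb]
    exact key ((shiftEquiv T (1:ℤ)).unitIso.hom.app X) _
      ((shiftEquiv T (1:ℤ)).unitIso.inv.app Y) hsh
  · -- the triangle is distinguished
    refine isomorphic_distinguished _ hT3 _ ?_
    refine Triangle.isoMk _ _ ((shiftEquiv T (1:ℤ)).unitIso.app X) (Iso.refl _) (Iso.refl _)
      (by simp [Triangle.mk]; exact comp_id _)
      (by simp [Triangle.mk]; exact (comp_id _).trans (id_comp _).symm) ?_
    dsimp [Triangle.invRotate, shiftEquiv]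
    simp [shift_shiftFunctorCompIsoId_add_neg_cancel_inv_app, Triangle.mk]
    exact (assoc _ _ _).symm
  · -- h.map (g ≫ u) ≫ commShift = τ
    rw [h.map_comp, hu]
    simp [hφ]
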